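/- Let a > 0 and let R > 0 be such that the chordal diameter of \overline{ℝⁿ}∖B(0,R) is less than a/2. Then every continuum C ⊂ \overline{ℝⁿ} with chordal diameter h(C) ≥ a contains a subcontinuum C₁ ⊂ \overline{B(0,R)} with h(C₁) ≥ a/4. -/

import Mathlib

open MeasureTheory Metric Set Filter Topology ENNReal

noncomputable section

/-- Euclidean `n`-space `ℝⁿ`. -/
abbrev Eucl (n : ℕ) : Type := EuclideanSpace ℝ (Fin n)

/-- The one-point compactification `\overline{ℝⁿ} = ℝⁿ ∪ {∞}`. -/
abbrev RSphere (n : ℕ) : Type := OnePoint (Eucl n)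

/-- The canonical inclusion `ℝⁿ ⊆ \overline{ℝⁿ}`. -/
def toRS {n : ℕ} (x : Eucl n) : RSphere n := Option.some x

/-- A curve: a map of an order-connected subset (interval) of `ℝ`, continuous on it. -/
structure Curve (X : Type*) [TopologicalSpace X] where
  toFun : ℝ → X
  domain : Set ℝ
  ord : domain.OrdConnected
  cont : ContinuousOn toFun domain

namespace Curve

variable {X : Type*} [TopologicalSpace X]

/-- Line integral of a density `ρ` along a curve, with respect to a generalized
distance `d`, defined as a supremum of Riemann–Stieltjes type sums over partitions. -/
def integralAlong (d : X → X → ℝ≥0∞) (ρ : X → ℝ≥0∞) (c : Curve X) : ℝ≥0∞ :=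
  ⨆ q : ℕ × {u : ℕ → ℝ // Monotone u ∧ ∀ i, u i ∈ c.domain},
    ∑ i ∈ Finset.range q.1,
      ρ (c.toFun (q.2.1 i)) * d (c.toFun (q.2.1 (i + 1))) (c.toFun (q.2.1 i))

/-- Restriction of a curve to a closed subinterval of its domain. -/
def restrictIcc (c : Curve X) (a b : ℝ) : Curve X :=
  ⟨c.toFun, c.domain ∩ Set.Icc a b, c.ord.inter Set.ordConnected_Icc,
    c.cont.mono Set.inter_subset_left⟩

/-- A curve is locally rectifiable (w.r.t. `d`) if it has finite length on
every compact subinterval of its domain. -/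
def LocRectifiable (d : X → X → ℝ≥0∞) (c : Curve X) : Prop :=
  ∀ a b : ℝ, (c.restrictIcc a b).integralAlong d (fun _ => 1) < ⊤

end Curve

/-- `ρ` is admissible for the curve family `Γ`: the line integral of `ρ` along every
locally rectifiable curve of `Γ` is at least `1`. -/
def IsAdmissibleFor {X : Type*} [TopologicalSpace X] (d : X → X → ℝ≥0∞)
    (Γ : Set (Curve X)) (ρ : X → ℝ≥0∞) : Prop :=
  ∀ c ∈ Γ, c.LocRectifiable d → 1 ≤ c.integralAlong d ρ

/-- The `p`-modulus of a family of curves in `ℝⁿ`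
(`⊤` if there is no admissible function, as an infimum over the empty type). -/
def pModulus (n : ℕ) (p : ℝ) (Γ : Set (Curve (Eucl n))) : ℝ≥0∞ :=
  ⨅ ρ : {ρ : Eucl n → ℝ≥0∞ // Measurable ρ ∧ IsAdmissibleFor edist Γ ρ},
    ∫⁻ x, ρ.1 x ^ p

/-- Euclidean extended distance on `\overline{ℝⁿ}`: `∞` is at infinite distance
from every other point. -/
def opDist {n : ℕ} : RSphere n → RSphere n → ℝ≥0∞ := fun x y =>
  Option.casesOn (motive := fun _ => ℝ≥0∞) x
    (Option.casesOn (motive := fun _ => ℝ≥0∞) y 0 (fun _ => ⊤))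
    (fun a => Option.casesOn (motive := fun _ => ℝ≥0∞) y ⊤ (fun b => edist a b))

/-- Extension of a density on `ℝⁿ` to `\overline{ℝⁿ}` by `0` at `∞`. -/
def extFun {n : ℕ} (ρ : Eucl n → ℝ≥0∞) : RSphere n → ℝ≥0∞ := fun x =>
  Option.casesOn (motive := fun _ => ℝ≥0∞) x 0 ρ

/-- The `p`-modulus of a family of curves in `\overline{ℝⁿ}`; admissible densities live on
`ℝⁿ` and are extended by `0` at `∞`. -/
def pModulusOP (n : ℕ) (p : ℝ) (Γ : Set (Curve (RSphere n))) : ℝ≥0∞ :=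
  ⨅ ρ : {ρ : Eucl n → ℝ≥0∞ // Measurable ρ ∧ IsAdmissibleFor opDist Γ (extFun ρ)},
    ∫⁻ x, ρ.1 x ^ p

/-- The family of curves joining `E₀` and `E₁` in `A`. -/
def JoinCurves {X : Type*} [TopologicalSpace X] (E₀ E₁ A : Set X) : Set (Curve X) :=
  {c | ∃ a b : ℝ, a ≤ b ∧ c.domain = Set.Icc a b ∧ c.toFun a ∈ E₀ ∧ c.toFun b ∈ E₁ ∧
    ∀ t ∈ Set.Ioo a b, c.toFun t ∈ A}

/-- The image of a curve family under a mapping. -/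
def ImageCurves {X Y : Type*} [TopologicalSpace X] [TopologicalSpace Y] (f : X → Y)
    (Γ : Set (Curve X)) : Set (Curve Y) :=
  {c' | ∃ c ∈ Γ, c'.domain = c.domain ∧ ∀ t ∈ c.domain, c'.toFun t = f (c.toFun t)}

/-- The open spherical ring `A(r₁,r₂,x₀) = {x : r₁ < |x − x₀| < r₂}`. -/
def ringDomain {n : ℕ} (x₀ : Eucl n) (r₁ r₂ : ℝ) : Set (Eucl n) :=
  {x | r₁ < dist x x₀ ∧ dist x x₀ < r₂}

/-- The (extended) distance from `x₀` to `∂D`, namely `∞` when `D = ℝⁿ`. -/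
def distToBoundary {n : ℕ} (x₀ : Eucl n) (D : Set (Eucl n)) : ℝ≥0∞ :=
  EMetric.infEdist x₀ Dᶜ

/-- `f : D → ℝⁿ` is a ring `(p,Q)`-mapping at the point `x₀`. -/
def IsRingMap (n : ℕ) (p : ℝ) (D : Set (Eucl n)) (Q : Eucl n → ℝ≥0∞) (x₀ : Eucl n)
    (f : Eucl n → Eucl n) : Prop :=
  ∀ r₁ r₂ : ℝ, 0 < r₁ → r₁ < r₂ → ENNReal.ofReal r₂ < distToBoundary x₀ D →
    ∀ η : ℝ → ℝ≥0∞, Measurable η → (1 : ℝ≥0∞) ≤ ∫⁻ r in Set.Ioo r₁ r₂, η r →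
      pModulus n p (ImageCurves f (JoinCurves (Metric.sphere x₀ r₁) (Metric.sphere x₀ r₂)
          (ringDomain x₀ r₁ r₂))) ≤
        ∫⁻ x in ringDomain x₀ r₁ r₂, Q x * η (dist x x₀) ^ p

/-- `f : D → \overline{ℝⁿ}` is a ring `(p,Q)`-mapping at the point `x₀`. -/
def IsRingMapOP (n : ℕ) (p : ℝ) (D : Set (Eucl n)) (Q : Eucl n → ℝ≥0∞) (x₀ : Eucl n)
    (f : Eucl n → RSphere n) : Prop :=
  ∀ r₁ r₂ : ℝ, 0 < r₁ → r₁ < r₂ → ENNReal.ofReal r₂ < distToBoundary x₀ D →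
    ∀ η : ℝ → ℝ≥0∞, Measurable η → (1 : ℝ≥0∞) ≤ ∫⁻ r in Set.Ioo r₁ r₂, η r →
      pModulusOP n p (ImageCurves f (JoinCurves (Metric.sphere x₀ r₁) (Metric.sphere x₀ r₂)
          (ringDomain x₀ r₁ r₂))) ≤
        ∫⁻ x in ringDomain x₀ r₁ r₂, Q x * η (dist x x₀) ^ p

/-- `f` is discrete on `D`: each fiber of `f` has only isolated points in `D`. -/
def DiscreteOn {X Y : Type*} [TopologicalSpace X] (f : X → Y) (D : Set X) : Prop :=
  ∀ x ∈ D, ∃ U ∈ nhds x, ∀ z ∈ U ∩ D, f z = f x → z = x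

/-- `f` is open on `D`: it maps open subsets of `D` onto open sets. -/
def IsOpenOn {X Y : Type*} [TopologicalSpace X] [TopologicalSpace Y] (f : X → Y)
    (D : Set X) : Prop :=
  ∀ U, U ⊆ D → IsOpen U → IsOpen (f '' U)

/-- `Q` has finite mean oscillation at `x₀`. -/
def FMOAt {n : ℕ} (Q : Eucl n → ℝ≥0∞) (x₀ : Eucl n) : Prop :=
  ∃ C : ℝ, ∀ᶠ ε in 𝓝[>] (0 : ℝ),
    (⨍ x in Metric.ball x₀ ε, |(Q x).toReal - ⨍ y in Metric.ball x₀ ε, (Q y).toReal|) ≤ C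

/-- The chordal metric on `\overline{ℝⁿ}` (auxiliary, on `Option`). -/
def chordalAux {n : ℕ} : Option (Eucl n) → Option (Eucl n) → ℝ
  | Option.some x, Option.some y =>
      dist x y / (Real.sqrt (1 + ‖x‖ ^ 2) * Real.sqrt (1 + ‖y‖ ^ 2))
  | Option.some x, Option.none => 1 / Real.sqrt (1 + ‖x‖ ^ 2)
  | Option.none, Option.some y => 1 / Real.sqrt (1 + ‖y‖ ^ 2)
  | Option.none, Option.none => 0

/-- The chordal metric `h` on `\overline{ℝⁿ}`. -/
def chordal {n : ℕ} (x y : RSphere n) : ℝ := chordalAux x y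

/-- The chordal diameter `h(S)` of a set `S ⊆ \overline{ℝⁿ}`. -/
def chordalDiam {n : ℕ} (S : Set (RSphere n)) : ℝ :=
  sSup ((fun q : RSphere n × RSphere n => chordal q.1 q.2) '' (S ×ˢ S))

/-- Equicontinuity at `x₀` of a family of `\overline{ℝⁿ}`-valued mappings on `D`
(w.r.t. the chordal metric in the target). -/
def EquicontAtOP {n : ℕ} (𝓕 : Set (Eucl n → RSphere n)) (D : Set (Eucl n))
    (x₀ : Eucl n) : Prop :=
  ∀ ε : ℝ, 0 < ε → ∃ δ : ℝ, 0 < δ ∧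
    ∀ f ∈ 𝓕, ∀ x ∈ D, dist x x₀ < δ → chordal (f x) (f x₀) < ε

/-- Equicontinuity at `x₀` of a family of `ℝⁿ`-valued mappings on `D`
(w.r.t. the chordal metric in the target). -/
def EquicontAt {n : ℕ} (𝓕 : Set (Eucl n → Eucl n)) (D : Set (Eucl n))
    (x₀ : Eucl n) : Prop :=
  ∀ ε : ℝ, 0 < ε → ∃ δ : ℝ, 0 < δ ∧
    ∀ f ∈ 𝓕, ∀ x ∈ D, dist x x₀ < δ → chordal (toRS (f x)) (toRS (f x₀)) < ε

/-- Normality of a family of `ℝⁿ`-valued mappings on `D`: every sequence has a subsequence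
converging uniformly on compact subsets of `D` (w.r.t. the chordal metric) to a continuous
mapping of `D` into `\overline{ℝⁿ}`. -/
def IsNormalFamily {n : ℕ} (𝓕 : Set (Eucl n → Eucl n)) (D : Set (Eucl n)) : Prop :=
  ∀ f : ℕ → Eucl n → Eucl n, (∀ k, f k ∈ 𝓕) →
    ∃ φ : ℕ → ℕ, StrictMono φ ∧ ∃ g : Eucl n → RSphere n, ContinuousOn g D ∧
      ∀ K, K ⊆ D → IsCompact K → ∀ ε : ℝ, 0 < ε →
        ∀ᶠ k in Filter.atTop, ∀ x ∈ K, chordal (toRS (f (φ k) x)) (g x) < ε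

/-- `v` is absolutely continuous on `[a,b]`: it is the indefinite integral of an
integrable function. -/
def AbsContOnIcc (v : ℝ → ℝ) (a b : ℝ) : Prop :=
  ∃ g : ℝ → ℝ, IntegrableOn g (Set.Icc a b) ∧ ∀ x ∈ Set.Icc a b, v x = v a + ∫ t in a..x, g t

/-- `u` is absolutely continuous on lines (ACL) in `A`: for each coordinate direction,
for a.e. line, `u` is absolutely continuous on compact subintervals lying in `A`. -/
def ACLOn {n : ℕ} (u : Eucl n → ℝ) (A : Set (Eucl n)) : Prop :=
  ∀ i : Fin n, ∀ᵐ x ∂(volume : Measure (Eucl n)), ∀ a b : ℝ, a ≤ b →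
    (∀ t ∈ Set.Icc a b, x + t • EuclideanSpace.single i (1 : ℝ) ∈ A) →
    AbsContOnIcc (fun t => u (x + t • EuclideanSpace.single i (1 : ℝ))) a b

/-- `|∇u|`, via the a.e. existing partial derivatives. -/
def gradNorm {n : ℕ} (u : Eucl n → ℝ) (x : Eucl n) : ℝ :=
  Real.sqrt (∑ i : Fin n, (lineDeriv ℝ u x (EuclideanSpace.single i (1 : ℝ))) ^ 2)

/-- The admissible class `W₀(A,C)` for the variational `p`-capacity. -/
def W0 {n : ℕ} (A C : Set (Eucl n)) : Set (Eucl n → ℝ) :=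
  {u | ContinuousOn u A ∧ (∀ x, 0 ≤ u x) ∧ ACLOn u A ∧
    (∃ K, IsCompact K ∧ K ⊆ A ∧ ∀ x ∉ K, u x = 0) ∧ ∀ x ∈ C, 1 ≤ u x}

/-- The variational `p`-capacity of the condenser `E = (A,C)` in `ℝⁿ`. -/
def pCap (n : ℕ) (p : ℝ) (A C : Set (Eucl n)) : ℝ≥0∞ :=
  ⨅ u : W0 A C, ∫⁻ x in A, ENNReal.ofReal (gradNorm u.1 x) ^ p

/-- A compact set `C` has zero `p`-capacity. -/
def IsZeroPCap {n : ℕ} (p : ℝ) (C : Set (Eucl n)) : Prop :=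
  ∃ A : Set (Eucl n), IsOpen A ∧ Bornology.IsBounded A ∧ C ⊆ A ∧ pCap n p A C = 0

/-- An arbitrary set `S ⊆ ℝⁿ` has positive `p`-capacity: some compact subset of `S`
does not have zero `p`-capacity. -/
def HasPosPCap {n : ℕ} (p : ℝ) (S : Set (Eucl n)) : Prop :=
  ∃ K, K ⊆ S ∧ IsCompact K ∧ ¬ IsZeroPCap p K

/-- The curve family `Γ_E` of a condenser `E = (A,C)`: curves `γ : [a,b) → A` starting in `C`
whose locus leaves every compact subset of `A`. -/
def condenserCurves {X : Type*} [TopologicalSpace X] (A C : Set X) : Set (Curve X) :=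
  {c | ∃ a b : ℝ, a < b ∧ c.domain = Set.Ico a b ∧ c.toFun a ∈ C ∧
    (∀ t ∈ Set.Ico a b, c.toFun t ∈ A) ∧
    ∀ F : Set X, IsCompact F → F ⊆ A → ∃ t ∈ Set.Ico a b, c.toFun t ∈ A \ F}

/-- The `p`-capacity of a condenser `(A,C)` in `\overline{ℝⁿ}`, defined as `M_p(Γ_E)`. -/
def pCapOP (n : ℕ) (p : ℝ) (A C : Set (RSphere n)) : ℝ≥0∞ :=
  pModulusOP n p (condenserCurves A C)

/-- The area `ω_{n−1}` of the unit sphere in `ℝⁿ` (as `(n−1)`-Hausdorff measure). -/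
def sphereArea (n : ℕ) : ℝ≥0∞ := μH[((n : ℝ) - 1)] (Metric.sphere (0 : Eucl n) 1)

/-- The spherical mean `q_{x₀}(r)` of `Q` over the sphere `|x − x₀| = r`. -/
def sphMean {n : ℕ} (Q : Eucl n → ℝ≥0∞) (x₀ : Eucl n) (r : ℝ) : ℝ≥0∞ :=
  (∫⁻ x in Metric.sphere x₀ r, Q x ∂(μH[((n : ℝ) - 1)])) /
    (sphereArea n * ENNReal.ofReal (r ^ ((n : ℝ) - 1)))

private instance rsphere_t2 (n : ℕ) : T2Space (RSphere n) := by
  have : R1Space (RSphere n) := inferInstance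
  infer_instance
/-! ### Auxiliary material for the proof of `exists_subcontinuum` -/

section ChordalFacts

variable {n : ℕ}

/-- Stereographic-type embedding of `\overline{ℝⁿ}` into `ℝⁿ ×₂ ℝ` realizing the
chordal metric as the induced distance. -/
private noncomputable def sProj : RSphere n → WithLp 2 (Eucl n × ℝ)
  | Option.none => (WithLp.equiv 2 (Eucl n × ℝ)).symm (0, 1)
  | Option.some a => (WithLp.equiv 2 (Eucl n × ℝ)).symm
      ((1 + ‖a‖ ^ 2)⁻¹ • a, ‖a‖ ^ 2 / (1 + ‖a‖ ^ 2))

private lemma eq_of_sq_eq {u v : ℝ} (hu : 0 ≤ u) (hv : 0 ≤ v) (h : u ^ 2 = v ^ 2) :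
    u = v := by nlinarith

private lemma chordal_some_none (a : Eucl n) :
    chordal (Option.some a) Option.none = 1 / Real.sqrt (1 + ‖a‖ ^ 2) := rfl

private lemma chordal_some_none_eq_dist (a : Eucl n) :
    chordal (Option.some a) Option.none
      = dist (sProj (Option.some a)) (sProj (Option.none : RSphere n)) := by
  have hA : (0:ℝ) < 1 + ‖a‖ ^ 2 := by positivity
  apply eq_of_sq_eq (by rw [chordal_some_none]; positivity) dist_nonneg
  rw [chordal_some_none, WithLp.prod_dist_eq_of_L2, Real.sq_sqrt (by positivity)]
  have hfst : dist (sProj (Option.some a)).fst (sProj (Option.none : RSphere n)).fst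
      = ‖(1 + ‖a‖ ^ 2)⁻¹ • a‖ := by
    show dist ((1 + ‖a‖ ^ 2)⁻¹ • a) (0 : Eucl n) = _
    rw [dist_zero_right]
  have hsnd : dist (sProj (Option.some a)).snd (sProj (Option.none : RSphere n)).snd
      = |‖a‖ ^ 2 / (1 + ‖a‖ ^ 2) - 1| := by
    show dist (‖a‖ ^ 2 / (1 + ‖a‖ ^ 2)) (1:ℝ) = _
    rw [Real.dist_eq]
  rw [hfst, hsnd, norm_smul, Real.norm_eq_abs, abs_of_pos (by positivity), sq_abs,
    div_pow, Real.sq_sqrt hA.le, one_pow, mul_pow]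
  have h1 : ‖a‖ ^ 2 / (1 + ‖a‖ ^ 2) - 1 = -(1 / (1 + ‖a‖ ^ 2)) := by field_simp; ring
  rw [h1]
  field_simp
  ring

private lemma chordal_eq_dist (x y : RSphere n) :
    chordal x y = dist (sProj x) (sProj y) := by
  match x, y with
  | Option.none, Option.none =>
      show (0:ℝ) = dist (sProj (Option.none : RSphere n)) (sProj (Option.none : RSphere n))
      rw [dist_self]
  | Option.some a, Option.none => exact chordal_some_none_eq_dist a
  | Option.none, Option.some b =>
      rw [dist_comm, ← chordal_some_none_eq_dist b]; rfl
  | Option.some a, Option.some b =>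
    have hA : (0:ℝ) < 1 + ‖a‖ ^ 2 := by positivity
    have hB : (0:ℝ) < 1 + ‖b‖ ^ 2 := by positivity
    have hch : chordal (Option.some a) (Option.some b)
        = dist a b / (Real.sqrt (1 + ‖a‖ ^ 2) * Real.sqrt (1 + ‖b‖ ^ 2)) := rfl
    apply eq_of_sq_eq (by rw [hch]; positivity) dist_nonneg
    rw [hch, WithLp.prod_dist_eq_of_L2, Real.sq_sqrt (by positivity)]
    have hfst : dist (sProj (Option.some a)).fst (sProj (Option.some b)).fst
        = ‖(1 + ‖a‖ ^ 2)⁻¹ • a - (1 + ‖b‖ ^ 2)⁻¹ • b‖ := by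
      show dist ((1 + ‖a‖ ^ 2)⁻¹ • a) ((1 + ‖b‖ ^ 2)⁻¹ • b) = _
      rw [dist_eq_norm]
    have hsnd : dist (sProj (Option.some a)).snd (sProj (Option.some b)).snd ^ 2
        = (‖a‖ ^ 2 / (1 + ‖a‖ ^ 2) - ‖b‖ ^ 2 / (1 + ‖b‖ ^ 2)) ^ 2 := by
      show dist (‖a‖ ^ 2 / (1 + ‖a‖ ^ 2)) (‖b‖ ^ 2 / (1 + ‖b‖ ^ 2)) ^ 2 = _
      rw [Real.dist_eq, sq_abs]
    rw [hfst, hsnd]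
    have hd1 : ‖(1 + ‖a‖ ^ 2)⁻¹ • a - (1 + ‖b‖ ^ 2)⁻¹ • b‖ ^ 2
        = ((1 + ‖a‖ ^ 2)⁻¹) ^ 2 * ‖a‖ ^ 2
          - 2 * ((1 + ‖a‖ ^ 2)⁻¹ * ((1 + ‖b‖ ^ 2)⁻¹ * (inner ℝ a b : ℝ)))
          + ((1 + ‖b‖ ^ 2)⁻¹) ^ 2 * ‖b‖ ^ 2 := by
      rw [norm_sub_sq_real, real_inner_smul_left, real_inner_smul_right,
        norm_smul, norm_smul, Real.norm_eq_abs, Real.norm_eq_abs,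
        abs_of_pos (by positivity : (0:ℝ) < (1 + ‖a‖ ^ 2)⁻¹),
        abs_of_pos (by positivity : (0:ℝ) < (1 + ‖b‖ ^ 2)⁻¹), mul_pow, mul_pow]
    have hd2 : dist a b ^ 2 = ‖a‖ ^ 2 - 2 * (inner ℝ a b : ℝ) + ‖b‖ ^ 2 := by
      rw [dist_eq_norm, norm_sub_sq_real]
    rw [hd1, div_pow, mul_pow, Real.sq_sqrt hA.le, Real.sq_sqrt hB.le, hd2]
    have hip : (inner ℝ a b : ℝ) = inner ℝ a b := rfl
    set e := ‖a‖ ^ 2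
    set f := ‖b‖ ^ 2
    set ip := (inner ℝ a b : ℝ)
    have he : (0:ℝ) < 1 + e := hA
    have hf : (0:ℝ) < 1 + f := hB
    field_simp
    ring

private lemma chordal_triangle (x y z : RSphere n) :
    chordal x z ≤ chordal x y + chordal y z := by
  rw [chordal_eq_dist, chordal_eq_dist, chordal_eq_dist]
  exact dist_triangle _ _ _

private lemma chordal_comm (x y : RSphere n) : chordal x y = chordal y x := by
  rw [chordal_eq_dist, chordal_eq_dist, dist_comm]

private lemma chordal_le_two (x y : RSphere n) : chordal x y ≤ 2 := by
  have h : ∀ z : RSphere n, chordal z Option.none ≤ 1 := by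
    intro z
    match z with
    | Option.none => show (0:ℝ) ≤ 1; norm_num
    | Option.some a =>
        rw [chordal_some_none]
        rw [div_le_one (by positivity)]
        have : (1:ℝ) = Real.sqrt 1 := by rw [Real.sqrt_one]
        rw [this]
        exact Real.sqrt_le_sqrt (by nlinarith [sq_nonneg ‖a‖])
  calc chordal x y ≤ chordal x Option.none + chordal Option.none y :=
        chordal_triangle _ _ _
    _ ≤ 1 + 1 := add_le_add (h x) ((chordal_comm _ _).trans_le (h y))
    _ = 2 := by norm_num

private lemma bddAbove_chordal (S : Set (RSphere n)) :
    BddAbove ((fun q : RSphere n × RSphere n => chordal q.1 q.2) '' (S ×ˢ S)) := by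
  refine ⟨2, ?_⟩
  rintro v ⟨⟨p, q⟩, -, rfl⟩
  exact chordal_le_two p q

private lemma chordal_le_diam {S : Set (RSphere n)} {p q : RSphere n}
    (hp : p ∈ S) (hq : q ∈ S) : chordal p q ≤ chordalDiam S :=
  le_csSup (bddAbove_chordal S) ⟨(p, q), ⟨hp, hq⟩, rfl⟩

end ChordalFacts

/-- Boundary bumping: in a continuum `C`, the connected component of a point of `C ∩ M`
inside `C ∩ M` reaches the closure of `C \ M`. -/
private lemma bump_lemma {X : Type*} [TopologicalSpace X] [T2Space X]
    {C M : Set X} (hC : IsCompact C) (hconn : IsPreconnected C)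
    (hM : IsClosed M) (hprop : (C \ M).Nonempty) {x : X} (hx : x ∈ C ∩ M) :
    ∃ K : Set X, K ⊆ C ∩ M ∧ IsCompact K ∧ IsPreconnected K ∧ x ∈ K ∧
      ∃ z ∈ K, z ∈ closure (C \ M) := by
  haveI : CompactSpace C := isCompact_iff_compactSpace.mp hC
  haveI : ConnectedSpace C := isConnected_iff_connectedSpace.mp ⟨⟨x, hx.1⟩, hconn⟩
  set F : Set C := ((↑) : C → X) ⁻¹' M with hFdef
  have hFc : IsClosed F := hM.preimage continuous_subtype_val
  haveI : CompactSpace F := isCompact_iff_compactSpace.mp hFc.isCompact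
  obtain ⟨w, hwC, hwM⟩ := hprop
  have hvalF : ((↑) : C → X) '' Fᶜ = C \ M := by
    ext u
    constructor
    · rintro ⟨⟨c, hc⟩, hcF, rfl⟩
      exact ⟨hc, hcF⟩
    · rintro ⟨huC, huM⟩
      exact ⟨⟨u, huC⟩, huM, rfl⟩
  set x' : C := ⟨x, hx.1⟩ with hx'def
  have hx'F : x' ∈ F := hx.2
  set x'' : F := ⟨x', hx'F⟩ with hx''def
  set Kf : Set F := connectedComponent x'' with hKfdef
  have core : ∃ z : F, z ∈ Kf ∧ (((z : C) : X)) ∈ closure (C \ M) := by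
    by_contra hcon
    push_neg at hcon
    have hsub : Kf ⊆ ((↑) : F → C) ⁻¹' interior F := by
      intro q hq
      by_contra hq'
      have h1 : (q : C) ∈ closure Fᶜ := by
        rw [closure_compl]
        exact hq'
      have h2 : ((q : C) : X) ∈ closure (((↑) : C → X) '' Fᶜ) :=
        (image_closure_subset_closure_image continuous_subtype_val) ⟨(q : C), h1, rfl⟩
      rw [hvalF] at h2
      exact hcon q hq h2
    have hBclosed : IsClosed (((↑) : F → C) ⁻¹' (interior F)ᶜ) :=
      (isClosed_compl_iff.mpr isOpen_interior).preimage continuous_subtype_val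
    have hBcpt : IsCompact (((↑) : F → C) ⁻¹' (interior F)ᶜ) := hBclosed.isCompact
    have hiInter : (((↑) : F → C) ⁻¹' (interior F)ᶜ) ∩
        ⋂ (s : {s : Set F // IsClopen s ∧ x'' ∈ s}), (s : Set F) = ∅ := by
      rw [← connectedComponent_eq_iInter_isClopen x'']
      rw [Set.eq_empty_iff_forall_notMem]
      rintro q ⟨hq1, hq2⟩
      exact hq1 (hsub hq2)
    obtain ⟨t, ht⟩ := hBcpt.elim_finite_subfamily_closed
      (fun s : {s : Set F // IsClopen s ∧ x'' ∈ s} => (s : Set F))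
      (fun s => s.2.1.isClosed) hiInter
    set Q : Set F := ⋂ s ∈ t, (s : Set F) with hQdef
    have hQclopen : IsClopen Q := isClopen_biInter_finset (fun s _ => s.2.1)
    have hxQ : x'' ∈ Q := by
      rw [hQdef, Set.mem_iInter₂]
      exact fun s _ => s.2.2
    have hQint : Q ⊆ ((↑) : F → C) ⁻¹' interior F := by
      intro q hq
      by_contra h
      have : q ∈ (((↑) : F → C) ⁻¹' (interior F)ᶜ) ∩ ⋂ s ∈ t, (s : Set F) := ⟨h, hq⟩
      rw [ht] at this
      exact this
    obtain ⟨V, hVopen, hV⟩ := isOpen_induced_iff.mp hQclopen.isOpen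
    set Q' : Set C := ((↑) : F → C) '' Q with hQ'def
    have hQ'subint : Q' ⊆ interior F := by
      rintro _ ⟨q, hq, rfl⟩
      exact hQint hq
    have hQ'eq : Q' = V ∩ interior F := by
      apply Set.Subset.antisymm
      · rintro u hu
        refine ⟨?_, hQ'subint hu⟩
        obtain ⟨q, hq, rfl⟩ := hu
        rw [← hV] at hq
        exact hq
      · rintro u ⟨huV, huint⟩
        have huF : u ∈ F := interior_subset huint
        refine ⟨⟨u, huF⟩, ?_, rfl⟩
        rw [← hV]
        exact huV
    have hQ'open : IsOpen Q' := by
      rw [hQ'eq]; exact hVopen.inter isOpen_interior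
    have hQ'closed : IsClosed Q' :=
      (hQclopen.isClosed.isCompact.image continuous_subtype_val).isClosed
    have hQ'univ : Q' = Set.univ :=
      IsClopen.eq_univ ⟨hQ'closed, hQ'open⟩ ⟨x', ⟨x'', hxQ, rfl⟩⟩
    have hw' : (⟨w, hwC⟩ : C) ∈ Q' := by rw [hQ'univ]; trivial
    obtain ⟨q, -, hq⟩ := hw'
    have hqM : ((q : C) : X) ∈ M := q.2
    rw [hq] at hqM
    exact hwM hqM
  obtain ⟨z, hzKf, hzcl⟩ := core
  refine ⟨((↑) : C → X) '' (((↑) : F → C) '' Kf), ?_, ?_, ?_, ?_, ?_⟩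
  · rintro _ ⟨_, ⟨q, hq, rfl⟩, rfl⟩
    exact ⟨(q : C).2, q.2⟩
  · exact ((isClosed_connectedComponent.isCompact.image
      continuous_subtype_val).image continuous_subtype_val)
  · exact ((isPreconnected_connectedComponent.image _
      continuous_subtype_val.continuousOn).image _ continuous_subtype_val.continuousOn)
  · exact ⟨x', ⟨x'', mem_connectedComponent, rfl⟩, rfl⟩
  · exact ⟨((z : C) : X), ⟨(z : C), ⟨z, hzKf, rfl⟩, rfl⟩, hzcl⟩

/-- if the chordal diameter of `\overline{ℝⁿ}∖B(0,R)` is less than `a/2`,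
then every continuum `C ⊆ \overline{ℝⁿ}` with `h(C) ≥ a` contains a subcontinuum
`C₁ ⊆ \overline{B(0,R)}` with `h(C₁) ≥ a/4`. -/
theorem exists_subcontinuum (n : ℕ) (hn : 2 ≤ n) (a R : ℝ) (ha : 0 < a) (hR : 0 < R)
    (hout : chordalDiam ((toRS '' Metric.ball (0 : Eucl n) R)ᶜ) < a / 2)
    (C : Set (RSphere n)) (hCcpt : IsCompact C) (hCconn : IsConnected C)
    (hCnt : C.Nontrivial) (hCd : a ≤ chordalDiam C) :
    ∃ C₁ : Set (RSphere n), C₁ ⊆ C ∧ C₁ ⊆ toRS '' Metric.closedBall (0 : Eucl n) R ∧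
      IsCompact C₁ ∧ IsConnected C₁ ∧ C₁.Nontrivial ∧ a / 4 ≤ chordalDiam C₁ := by
  classical
  set P : Set (RSphere n) := toRS '' Metric.ball (0 : Eucl n) R with hPdef
  set M : Set (RSphere n) := toRS '' Metric.closedBall (0 : Eucl n) R with hMdef
  have htoRS_cont : Continuous (toRS (n := n)) := OnePoint.continuous_coe
  have hPopen : IsOpen P := OnePoint.isOpenEmbedding_coe.isOpenMap _ Metric.isOpen_ball
  have hMclosed : IsClosed M :=
    ((isCompact_closedBall (0 : Eucl n) R).image htoRS_cont).isClosed
  have hPM : P ⊆ M := Set.image_mono Metric.ball_subset_closedBall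
  -- pick two far points
  have hpick : ∃ p ∈ C, ∃ q ∈ C, a / 2 + chordalDiam Pᶜ < chordal p q := by
    by_contra hcontra
    push_neg at hcontra
    have hub : chordalDiam C ≤ a / 2 + chordalDiam Pᶜ := by
      apply csSup_le
      · obtain ⟨p0, hp0, -, -, -⟩ := hCnt
        exact ⟨chordal p0 p0, ⟨(p0, p0), ⟨hp0, hp0⟩, rfl⟩⟩
      · rintro v ⟨⟨p0, q0⟩, ⟨hp0, hq0⟩, rfl⟩
        exact hcontra p0 hp0 q0 hq0
    linarith
  obtain ⟨p, hp, q, hq, hpq⟩ := hpick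
  by_cases hCM : C ⊆ M
  · exact ⟨C, subset_rfl, hCM, hCcpt, hCconn, hCnt, by linarith⟩
  obtain ⟨w, hwC, hwM⟩ := Set.not_subset.mp hCM
  have hprop : (C \ M).Nonempty := ⟨w, hwC, hwM⟩
  have hclos : closure (C \ M) ⊆ Pᶜ := by
    apply closure_minimal
    · intro u hu hup
      exact hu.2 (hPM hup)
    · exact hPopen.isClosed_compl
  -- normalize so that the first point is in P
  have hmain : ∃ p' ∈ C, ∃ q' ∈ C, a / 2 + chordalDiam Pᶜ < chordal p' q' ∧ p' ∈ P := by
    by_cases hpP : p ∈ P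
    · exact ⟨p, hp, q, hq, hpq, hpP⟩
    by_cases hqP : q ∈ P
    · exact ⟨q, hq, p, hp, by rwa [chordal_comm], hqP⟩
    · exfalso
      have hle : chordal p q ≤ chordalDiam Pᶜ := chordal_le_diam hpP hqP
      linarith
  clear hpq hp hq
  obtain ⟨p, hp, q, hq, hpq, hpP⟩ := hmain
  obtain ⟨K₁, hK₁sub, hK₁cpt, hK₁conn, hpK₁, z₁, hz₁K, hz₁cl⟩ :=
    bump_lemma hCcpt hCconn.isPreconnected hMclosed hprop ⟨hp, hPM hpP⟩
  have hz₁P : z₁ ∉ P := hclos hz₁cl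
  by_cases hqP : q ∈ P
  · -- both endpoints in P
    obtain ⟨K₂, hK₂sub, hK₂cpt, hK₂conn, hqK₂, z₂, hz₂K, hz₂cl⟩ :=
      bump_lemma hCcpt hCconn.isPreconnected hMclosed hprop ⟨hq, hPM hqP⟩
    have hz₂P : z₂ ∉ P := hclos hz₂cl
    have hzz : chordal z₁ z₂ ≤ chordalDiam Pᶜ := chordal_le_diam hz₁P hz₂P
    have hchain : chordal p q ≤ chordal p z₁ + chordal z₁ z₂ + chordal z₂ q := by
      have t1 := chordal_triangle p z₁ q
      have t2 := chordal_triangle z₁ z₂ q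
      linarith
    rcases le_or_gt (a / 4) (chordal p z₁) with hcase | hcase
    · refine ⟨K₁, fun u hu => (hK₁sub hu).1, fun u hu => (hK₁sub hu).2, hK₁cpt,
        ⟨⟨p, hpK₁⟩, hK₁conn⟩, ⟨p, hpK₁, z₁, hz₁K, ?_⟩, ?_⟩
      · intro hpz; rw [hpz] at hpP; exact hz₁P hpP
      · exact le_trans hcase (chordal_le_diam hpK₁ hz₁K)
    · have hcase2 : a / 4 ≤ chordal z₂ q := by linarith
      refine ⟨K₂, fun u hu => (hK₂sub hu).1, fun u hu => (hK₂sub hu).2, hK₂cpt,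
        ⟨⟨q, hqK₂⟩, hK₂conn⟩, ⟨q, hqK₂, z₂, hz₂K, ?_⟩, ?_⟩
      · intro hqz; rw [hqz] at hqP; exact hz₂P hqP
      · exact le_trans hcase2 (chordal_le_diam hz₂K hqK₂)
  · -- second endpoint outside P
    have h1 : chordal z₁ q ≤ chordalDiam Pᶜ := chordal_le_diam hz₁P hqP
    have h2 : a / 4 ≤ chordal p z₁ := by
      have := chordal_triangle p z₁ q
      linarith
    refine ⟨K₁, fun u hu => (hK₁sub hu).1, fun u hu => (hK₁sub hu).2, hK₁cpt,
      ⟨⟨p, hpK₁⟩, hK₁conn⟩, ⟨p, hpK₁, z₁, hz₁K, ?_⟩, ?_⟩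
    · intro hpz; rw [hpz] at hpP; exact hz₁P hpP
    · exact le_trans h2 (chordal_le_diam hpK₁ hz₁K)
end
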